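/- Let g : ℝ → ℝ be defined by g(x) = Σ_{n=1}^∞ 2^{-n} φ_n(x), where {r_n} is an enumeration of ℚ and φ_n(x) = sin(1/(x − r_n)) for x ≠ r_n and φ_n(r_n) = 0. Then g is a Baire-one function with the Darboux (intermediate value) property. -/

import Mathlib

open Real Filter Set

noncomputable def auxc (q x : ℝ) : ℝ := 2 * (x - q) * Real.cos (x - q)⁻¹
noncomputable def auxG (q x : ℝ) : ℝ := (x - q) ^ 2 * Real.cos (x - q)⁻¹

lemma auxc_cont (q : ℝ) : Continuous (auxc q) := by
  rw [continuous_iff_continuousAt]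
  intro x
  rcases eq_or_ne x q with rfl | h
  · have h0 : auxc x x = 0 := by simp [auxc]
    unfold ContinuousAt
    rw [h0]
    refine squeeze_zero_norm (a := fun y => 2 * ‖y - x‖) (fun y => ?_) ?_
    · have := Real.abs_cos_le_one (y - x)⁻¹
      calc ‖auxc x y‖ = 2 * |y - x| * |Real.cos (y - x)⁻¹| := by
            simp [auxc, abs_mul, abs_of_nonneg]
        _ ≤ 2 * |y - x| * 1 := by
            apply mul_le_mul_of_nonneg_left this (by positivity)
        _ = 2 * ‖y - x‖ := by simp
    · have h2 : Tendsto (fun y : ℝ => y - x) (nhds x) (nhds 0) := by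
        simpa using (tendsto_id (x := nhds x)).sub_const x
      simpa using (h2.norm.const_mul 2)
  · have h1 : ContinuousAt (fun y : ℝ => (y - q)⁻¹) x :=
      ((continuousAt_id.sub continuousAt_const).inv₀ (sub_ne_zero.mpr h))
    exact ((continuousAt_const.mul (continuousAt_id.sub continuousAt_const)).mul
      (Real.continuous_cos.continuousAt.comp h1))

lemma hasDerivAt_auxG_self (q : ℝ) : HasDerivAt (auxG q) 0 q := by
  rw [hasDerivAt_iff_tendsto_slope]
  refine squeeze_zero_norm (a := fun y => ‖y - q‖) (fun y => ?_) ?_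
  ·
    rcases eq_or_ne y q with h | h
    · simp [h, slope, auxG]
    · have hy : y - q ≠ 0 := sub_ne_zero.mpr h
      rw [slope_def_field]
      have h0 : auxG q q = 0 := by simp [auxG]
      rw [h0, sub_zero]
      have : auxG q y / (y - q) = (y - q) * Real.cos (y - q)⁻¹ := by
        rw [auxG, pow_two, mul_assoc, mul_div_cancel_left₀ _ hy]
      rw [this, norm_mul]
      have := Real.abs_cos_le_one (y - q)⁻¹
      calc ‖y - q‖ * ‖Real.cos (y - q)⁻¹‖ ≤ ‖y - q‖ * 1 := by
            apply mul_le_mul_of_nonneg_left (by simpa using this) (norm_nonneg _)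
        _ = ‖y - q‖ := by ring
  · have h2 : Tendsto (fun y : ℝ => y - q) (nhds q) (nhds 0) := by
      simpa using (tendsto_id (x := nhds q)).sub_const q
    simpa using h2.norm.mono_left nhdsWithin_le_nhds

lemma hasDerivAt_auxG_ne (q x : ℝ) (h : x ≠ q) :
    HasDerivAt (auxG q) (auxc q x + Real.sin (1 / (x - q))) x := by
  have hx : x - q ≠ 0 := sub_ne_zero.mpr h
  have h1 : HasDerivAt (fun y : ℝ => y - q) 1 x := (hasDerivAt_id x).sub_const q
  have h2 : HasDerivAt (fun y : ℝ => (y - q)⁻¹) (-((x - q) ^ 2)⁻¹ * 1) x :=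
    (hasDerivAt_inv hx).comp x h1
  have h3 : HasDerivAt (fun y : ℝ => Real.cos (y - q)⁻¹)
      (-Real.sin (x - q)⁻¹ * (-((x - q) ^ 2)⁻¹ * 1)) x :=
    (Real.hasDerivAt_cos _).comp x h2
  have h4 : HasDerivAt (fun y : ℝ => (y - q) ^ 2) (2 * (x - q) ^ 1 * 1) x := h1.pow 2
  have h5 := h4.mul h3
  refine h5.congr_deriv ?_
  rw [auxc, one_div]
  field_simp

noncomputable def auxH (q x : ℝ) : ℝ :=
  auxG q x - auxG q 0 - ∫ t in (0:ℝ)..x, auxc q t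

lemma hasDerivAt_auxH (q x : ℝ) :
    HasDerivAt (auxH q) (if x = q then 0 else Real.sin (1 / (x - q))) x := by
  have hint : HasDerivAt (fun y => ∫ t in (0:ℝ)..y, auxc q t) (auxc q x) x :=
    ((auxc_cont q).integral_hasStrictDerivAt 0 x).hasDerivAt
  rcases eq_or_ne x q with rfl | h
  · simp only [if_pos rfl]
    have := ((hasDerivAt_auxG_self x).sub_const (auxG x 0)).sub hint
    have h0 : auxc x x = 0 := by simp [auxc]
    exact this.congr_deriv (by simp [h0])
  · simp only [if_neg h]
    have := ((hasDerivAt_auxG_ne q x h).sub_const (auxG q 0)).sub hint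
    exact this.congr_deriv (by ring)

set_option maxHeartbeats 1000000 in
theorem stmt14 (r : ℕ → ℚ) (hr : Function.Bijective r)
    (φ : ℕ → ℝ → ℝ)
    (hφ : ∀ n x, φ n x = if x = (r n : ℝ) then 0 else Real.sin (1 / (x - (r n : ℝ))))
    (g : ℝ → ℝ)
    (hg : ∀ x, g x = ∑' n : ℕ, (1 / 2 : ℝ) ^ (n + 1) * φ n x) :
    (∃ h : ℕ → ℝ → ℝ, (∀ n, Continuous (h n)) ∧
        ∀ x, Filter.Tendsto (fun n => h n x) Filter.atTop (nhds (g x))) ∧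
    (∀ C : Set ℝ, IsPreconnected C → IsPreconnected (g '' C)) := by
  have hu : Summable (fun n : ℕ => (1/2:ℝ)^(n+1)) :=
    (summable_nat_add_iff 1).mpr
      (summable_geometric_of_lt_one (by norm_num : (0:ℝ) ≤ 1/2) (by norm_num))
  have hD : ∀ (n : ℕ) (y : ℝ),
      HasDerivAt (fun z => (1/2:ℝ)^(n+1) * auxH ((r n : ℝ)) z) ((1/2:ℝ)^(n+1) * φ n y) y := by
    intro n y
    have := (hasDerivAt_auxH ((r n : ℝ)) y).const_mul ((1/2:ℝ)^(n+1))
    rwa [← hφ] at this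
  have hbound : ∀ (n : ℕ) (y : ℝ), ‖(1/2:ℝ)^(n+1) * φ n y‖ ≤ (1/2:ℝ)^(n+1) := by
    intro n y
    rw [norm_mul]
    have h1 : ‖φ n y‖ ≤ 1 := by
      rw [hφ]
      split
      · simp
      · simpa using Real.abs_sin_le_one _
    calc ‖(1/2:ℝ)^(n+1)‖ * ‖φ n y‖ ≤ ‖(1/2:ℝ)^(n+1)‖ * 1 :=
          mul_le_mul_of_nonneg_left h1 (norm_nonneg _)
      _ = (1/2:ℝ)^(n+1) := by
          rw [mul_one, norm_pow, Real.norm_eq_abs]; norm_num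
  have h0 : Summable (fun n : ℕ => (1/2:ℝ)^(n+1) * auxH ((r n : ℝ)) 0) := by
    have he : ∀ n : ℕ, (1/2:ℝ)^(n+1) * auxH ((r n : ℝ)) 0 = 0 := by
      intro n; simp [auxH, intervalIntegral.integral_same]
    exact (summable_congr (fun n => (he n))).mpr summable_zero
  have key : ∀ x, HasDerivAt (fun z => ∑' n : ℕ, (1/2:ℝ)^(n+1) * auxH ((r n : ℝ)) z) (g x) x := by
    intro x
    rw [hg x]
    exact hasDerivAt_tsum (y₀ := (0:ℝ)) hu hD hbound h0 x
  set F : ℝ → ℝ := fun z => ∑' n : ℕ, (1/2:ℝ)^(n+1) * auxH ((r n : ℝ)) z with hFdef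
  have hFc : Continuous F := by
    rw [continuous_iff_continuousAt]; exact fun x => (key x).continuousAt
  constructor
  · refine ⟨fun k x => ((k:ℝ)+1) * (F (x + ((k:ℝ)+1)⁻¹) - F x), fun k => ?_, fun x => ?_⟩
    · exact continuous_const.mul ((hFc.comp (continuous_id.add continuous_const)).sub hFc)
    · have hs := hasDerivAt_iff_tendsto_slope.mp (key x)
      have ht : Tendsto (fun k : ℕ => x + ((k:ℝ)+1)⁻¹) atTop (nhdsWithin x {x}ᶜ) := by
        apply tendsto_nhdsWithin_of_tendsto_nhds_of_eventually_within
        · have h1 : Tendsto (fun k : ℕ => ((k:ℝ)+1)⁻¹) atTop (nhds 0) := by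
            simpa [one_div] using tendsto_one_div_add_atTop_nhds_zero_nat (𝕜 := ℝ)
          simpa using (tendsto_const_nhds (x := x) (f := atTop)).add h1
        · filter_upwards with k
          have : (0:ℝ) < ((k:ℝ)+1)⁻¹ := by positivity
          simp only [Set.mem_compl_iff, Set.mem_singleton_iff]
          intro hcontra
          nlinarith [congrArg (fun t => t - x) hcontra]
      have := hs.comp ht
      convert this using 2 with k
      rw [Function.comp_apply, slope_def_field]
      have hk : ((k:ℝ)+1) ≠ 0 := by positivity
      field_simp
      ring
  · intro C hC
    rw [isPreconnected_iff_ordConnected] at hC ⊢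
    exact hC.image_hasDerivWithinAt (fun x _ => (key x).hasDerivWithinAt)
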